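/- Let Tₙ = (3/2)√n·Δ + Rₙ where Δ ≠ 0 is a fixed real and Rₙ is bounded. Let λₙ = c₁ n^{−a}, κₙ = c₂ n^{−b} with c₂ > 0 and 0 ≤ a ≤ b < 1/2. Then Dₙ = (9n λₙ²/4 − (9n/4)κₙ² Tₙ² + 3√n λₙ Tₙ)/((9n/4)κₙ² + 1) → −∞ at rate n, i.e., Dₙ/n converges to a strictly negative constant −(9/4)Δ²·limiting factor; in particular exp(Dₙ/2) → 0. -/

import Mathlib

open Real MeasureTheory Filter Topology

/-- standard normal pdf -/
noncomputable def phi (x : ℝ) : ℝ := (Real.sqrt (2 * Real.pi))⁻¹ * Real.exp (-x ^ 2 / 2)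

/-- standard normal cdf -/
noncomputable def Phi (x : ℝ) : ℝ := ∫ t in Set.Iic x, phi t

theorem stmt_7 (Δ : ℝ) (hΔ : Δ ≠ 0) (R : ℕ → ℝ) (M : ℝ) (hR : ∀ n, |R n| ≤ M)
    (T : ℕ → ℝ) (hT : ∀ n : ℕ, T n = (3 / 2) * Real.sqrt n * Δ + R n)
    (c₁ c₂ a b : ℝ) (hc₂ : 0 < c₂) (ha : 0 ≤ a) (hab : a ≤ b) (hb : b < 1 / 2)
    (lam kap D : ℕ → ℝ)
    (hlam : ∀ n : ℕ, lam n = c₁ * (n : ℝ) ^ (-a))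
    (hkap : ∀ n : ℕ, kap n = c₂ * (n : ℝ) ^ (-b))
    (hD : ∀ n : ℕ, D n =
        (9 * (n : ℝ) * lam n ^ 2 / 4 - 9 * (n : ℝ) / 4 * kap n ^ 2 * T n ^ 2 +
            3 * Real.sqrt n * lam n * T n) /
          (9 * (n : ℝ) / 4 * kap n ^ 2 + 1)) :
    (∃ L : ℝ, L < 0 ∧ Tendsto (fun n : ℕ => D n / (n : ℝ)) atTop (nhds L)) ∧
    Tendsto (fun n : ℕ => Real.exp (D n / 2)) atTop (nhds 0) := by
  -- rpow limits
  have hrp : ∀ e : ℝ, e < 0 → Tendsto (fun n : ℕ => (n : ℝ) ^ e) atTop (𝓝 0) := by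
    intro e he
    have h2 := (tendsto_rpow_neg_atTop (by linarith : (0:ℝ) < -e)).comp tendsto_natCast_atTop_atTop
    simpa [Function.comp_def, neg_neg] using h2
  set t : ℕ → ℝ := fun n => T n / Real.sqrt n with ht_def
  -- t tends to (3/2)Δ
  have ht : Tendsto t atTop (𝓝 ((3/2) * Δ)) := by
    have hRn : Tendsto (fun n : ℕ => R n / Real.sqrt n) atTop (𝓝 0) := by
      apply squeeze_zero_norm' (a := fun n : ℕ => |M| * (n : ℝ) ^ (-(1/2 : ℝ)))
      · filter_upwards [eventually_ge_atTop 1] with n hn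
        have hx : (1:ℝ) ≤ (n:ℝ) := by exact_mod_cast hn
        have hs : 0 < Real.sqrt n := Real.sqrt_pos.2 (by linarith)
        have h1 : (n:ℝ) ^ (-(1/2 : ℝ)) = (Real.sqrt n)⁻¹ := by
          rw [Real.rpow_neg (by linarith), ← Real.sqrt_eq_rpow]
        rw [h1]
        have h2 : |R n / Real.sqrt n| = |R n| / Real.sqrt n := by
          rw [abs_div, abs_of_pos hs]
        rw [Real.norm_eq_abs, h2, div_eq_mul_inv]
        exact mul_le_mul_of_nonneg_right ((hR n).trans (le_abs_self M)) (inv_nonneg.2 hs.le)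
      · simpa using (hrp (-(1/2)) (by norm_num)).const_mul |M|
    have heq : ∀ᶠ n in atTop, (3/2) * Δ + R n / Real.sqrt n = t n := by
      filter_upwards [eventually_ge_atTop 1] with n hn
      have hx : (0:ℝ) < (n:ℝ) := by exact_mod_cast hn
      have hs : Real.sqrt n ≠ 0 := (Real.sqrt_pos.2 hx).ne'
      rw [ht_def]
      simp only [hT n]
      field_simp
    have := (tendsto_const_nhds (x := (3/2) * Δ) (f := atTop)).add hRn
    simpa using this.congr' heq
  set g : ℕ → ℝ := fun n =>
      ((9/4) * c₁^2 * (n:ℝ) ^ (2*b - 2*a - 1) - (9/4) * c₂^2 * (t n)^2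
        + 3 * c₁ * (n:ℝ) ^ (2*b - a - 1) * (t n)) / ((9/4) * c₂^2 + (n:ℝ) ^ (2*b - 1))
    with hg_def
  -- limit of g
  have he1 : 2*b - 2*a - 1 < 0 := by linarith
  have he2 : 2*b - a - 1 < 0 := by linarith
  have he3 : 2*b - 1 < 0 := by linarith
  have hden_ne : (9/4) * c₂^2 + (0:ℝ) ≠ 0 := by positivity
  have hg : Tendsto g atTop (𝓝
      (((9/4) * c₁^2 * 0 - (9/4) * c₂^2 * ((3/2)*Δ)^2 + 3 * c₁ * 0 * ((3/2)*Δ)) /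
        ((9/4) * c₂^2 + 0))) := by
    refine Tendsto.div ?_ ?_ hden_ne
    · exact ((((hrp _ he1).const_mul _).sub ((ht.pow 2).const_mul _)).add
        (((hrp _ he2).const_mul _).mul ht))
    · exact tendsto_const_nhds.add (hrp _ he3)
  have hLval : ((9/4) * c₁^2 * 0 - (9/4) * c₂^2 * ((3/2)*Δ)^2 + 3 * c₁ * 0 * ((3/2)*Δ)) /
      ((9/4) * c₂^2 + 0) = -(9/4 * Δ^2) := by
    field_simp
    ring
  rw [hLval] at hg
  -- key identity : D n / n = g n for n ≥ 1
  have key : ∀ n : ℕ, 1 ≤ n → D n / (n:ℝ) = g n := by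
    intro n hn
    have hx : (0:ℝ) < (n:ℝ) := by exact_mod_cast hn
    have hs0 : 0 < Real.sqrt n := Real.sqrt_pos.2 hx
    have hss : Real.sqrt (n:ℝ) * Real.sqrt (n:ℝ) = (n:ℝ) := Real.mul_self_sqrt hx.le
    have hPw : ((n:ℝ)) ^ (2*b - 2*a - 1) = ((n:ℝ) ^ (-a))^2 * (n:ℝ) ^ (2*b - 1) := by
      rw [sq, ← Real.rpow_add hx, ← Real.rpow_add hx]
      congr 1; ring
    have hPw2 : ((n:ℝ)) ^ (2*b - a - 1) = (n:ℝ) ^ (-a) * (n:ℝ) ^ (2*b - 1) := by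
      rw [← Real.rpow_add hx]
      congr 1; ring
    have hQw : ((n:ℝ) ^ (-b))^2 = (((n:ℝ)) ^ (2*b - 1) * (n:ℝ))⁻¹ := by
      rw [sq, ← Real.rpow_add hx]
      rw [show ((n:ℝ)) ^ (2*b - 1) * (n:ℝ) = ((n:ℝ)) ^ (2*b - 1) * (n:ℝ) ^ (1:ℝ) by
        rw [Real.rpow_one], ← Real.rpow_add hx, ← Real.rpow_neg hx.le]
      congr 1; ring
    have hw0 : 0 < ((n:ℝ)) ^ (2*b - 1) := Real.rpow_pos_of_pos hx _
    rw [hD, hlam, hkap, hg_def]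
    simp only [hPw, hPw2, hQw, mul_pow]
    rw [ht_def]
    set s := Real.sqrt (n:ℝ)
    set P := ((n:ℝ)) ^ (-a)
    set w := ((n:ℝ)) ^ (2*b - 1)
    rw [← hss]
    have hden1 : 9 * (s*s) / 4 * (c₂^2 * (w * (s*s))⁻¹) + 1 ≠ 0 := by positivity
    have hden2 : 9/4 * c₂^2 + w ≠ 0 := by positivity
    field_simp
    ring
  have hkey' : g =ᶠ[atTop] fun n : ℕ => D n / (n:ℝ) := by
    filter_upwards [eventually_ge_atTop 1] with n hn
    exact (key n hn).symm
  have hDn : Tendsto (fun n : ℕ => D n / (n:ℝ)) atTop (𝓝 (-(9/4 * Δ^2))) :=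
    hg.congr' hkey'
  have hLneg : -(9/4 * Δ^2) < 0 := by
    have : 0 < Δ^2 := by positivity
    linarith
  refine ⟨⟨-(9/4 * Δ^2), hLneg, hDn⟩, ?_⟩
  -- second part
  have hDbot : Tendsto D atTop atBot := by
    have h1 : Tendsto (fun n : ℕ => (n:ℝ) * (D n / (n:ℝ))) atTop atBot :=
      Tendsto.atTop_mul_neg hLneg tendsto_natCast_atTop_atTop hDn
    apply h1.congr'
    filter_upwards [eventually_ge_atTop 1] with n hn
    have hx : ((n:ℝ)) ≠ 0 := by positivity
    field_simp
  have h2 : Tendsto (fun n : ℕ => D n / 2) atTop atBot :=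
    hDbot.atBot_div_const (by norm_num)
  exact Real.tendsto_exp_atBot.comp h2
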